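/- Let g be a Lie algebra with a cobracket δ : g → g ∧ g satisfying the co-Jacobi identity. Then (g, δ) is a Lie bialgebra (i.e., δ is a 1-cocycle: δ([X,Y]) = ad_X·δ(Y) − ad_Y·δ(X)) if and only if the dual map δ* : g* ∧ g* → g* together with the dual of the bracket make g* ⊕ g into a Lie algebra (the Drinfeld double) with bracket extending those of g and g* by [X, α] = ad*_X α − ad*_α X, where ad* denotes the coadjoint actions. -/
import Mathlib

set_option linter.unusedSectionVars false
set_option maxHeartbeats 1000000


open TensorProduct

variable {K g : Type*} [Field K] [CharZero K] [LieRing g] [LieAlgebra K g]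

/-- The cyclic permutation `x ⊗ y ⊗ z ↦ y ⊗ z ⊗ x`. -/
noncomputable def cyc3 (K g : Type*) [Field K] [AddCommGroup g] [Module K g] :
    g ⊗[K] (g ⊗[K] g) →ₗ[K] g ⊗[K] (g ⊗[K] g) :=
  (TensorProduct.assoc K g g g).toLinearMap ∘ₗ
    (TensorProduct.comm K g (g ⊗[K] g)).toLinearMap

/-- Co-Jacobi identity `(1 + τ + τ²)(δ ⊗ id)δ = 0`. -/
noncomputable def CoJacobi3 (δ : g →ₗ[K] g ⊗[K] g) : Prop :=
  ∀ X : g,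
    (let J : g →ₗ[K] g ⊗[K] (g ⊗[K] g) :=
      (TensorProduct.assoc K g g g).toLinearMap ∘ₗ
        (TensorProduct.map δ LinearMap.id) ∘ₗ δ;
     J X + cyc3 K g (J X) + cyc3 K g (cyc3 K g (J X))) = 0

/-- The adjoint action of `X` on `g ⊗ g` as a derivation: `ad_X ⊗ 1 + 1 ⊗ ad_X`. -/
noncomputable def adTensor (X : g) : g ⊗[K] g →ₗ[K] g ⊗[K] g :=
  TensorProduct.map (LieAlgebra.ad K g X) LinearMap.id
    + TensorProduct.map LinearMap.id (LieAlgebra.ad K g X)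

/-- The bracket on `g*` dual to the cobracket `δ`: `⟨[α,β], X⟩ = (α ⊗ β)(δ X)`. -/
noncomputable def dualBr (δ : g →ₗ[K] g ⊗[K] g)
    (α β : Module.Dual K g) : Module.Dual K g :=
  (TensorProduct.lift (α.smulRight β)) ∘ₗ δ

/-- The coadjoint action of `α ∈ g*` on `g` (via `δ`):
`⟨β, ad*_α X⟩ = −⟨[α,β], X⟩ = −(α ⊗ β)(δ X)`. -/
noncomputable def coadStar (δ : g →ₗ[K] g ⊗[K] g) (α : Module.Dual K g) :
    g →ₗ[K] g :=
  - ((TensorProduct.lift (α.smulRight (LinearMap.id (R := K) (M := g)))) ∘ₗ δ)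

/-- The coadjoint action of `X ∈ g` on `g*`: `⟨ad*_X α, Y⟩ = −⟨α, [X,Y]⟩`. -/
noncomputable def coadG (X : g) (α : Module.Dual K g) : Module.Dual K g :=
  - (α ∘ₗ (LieAlgebra.ad K g X : g →ₗ[K] g))

/-- The Drinfeld double bracket on `g ⊕ g*`:
`[(X,α),(Y,β)] = ([X,Y] + ad*_α Y − ad*_β X, [α,β] + ad*_X β − ad*_Y α)`. -/
noncomputable def doubleBr (δ : g →ₗ[K] g ⊗[K] g)
    (u v : g × Module.Dual K g) : g × Module.Dual K g :=
  (⁅u.1, v.1⁆ + coadStar δ u.2 v.1 - coadStar δ v.2 u.1,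
   dualBr δ u.2 v.2 + coadG u.1 v.2 - coadG v.1 u.2)


/-- Pairing of two covectors against `g ⊗ g`. -/
noncomputable def ee (α β : Module.Dual K g) : g ⊗[K] g →ₗ[K] K :=
  TensorProduct.lift (α.smulRight β)

@[simp] lemma ee_tmul (α β : Module.Dual K g) (x y : g) :
    ee α β (x ⊗ₜ[K] y) = α x * β y := by
  simp [ee, smul_eq_mul]

lemma ee_comm (α β : Module.Dual K g) (t : g ⊗[K] g) :
    ee α β (TensorProduct.comm K g g t) = ee β α t := by
  have h : (ee α β) ∘ₗ (TensorProduct.comm K g g).toLinearMap = ee β α :=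
    TensorProduct.ext' (by intro x y; simp [mul_comm])
  exact LinearMap.congr_fun h t

section helpers
variable {M : Type*} [AddCommGroup M] [Module K M]

lemma lift_sr_add (α α' : Module.Dual K g) (c : g →ₗ[K] M) :
    TensorProduct.lift ((α + α').smulRight c)
      = TensorProduct.lift (α.smulRight c) + TensorProduct.lift (α'.smulRight c) :=
  TensorProduct.ext' (by intro x y; simp [add_smul])

lemma lift_sr_neg (α : Module.Dual K g) (c : g →ₗ[K] M) :
    TensorProduct.lift ((-α).smulRight c) = - TensorProduct.lift (α.smulRight c) :=
  TensorProduct.ext' (by intro x y; simp)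

lemma lift_sr_zero (c : g →ₗ[K] M) :
    TensorProduct.lift ((0 : Module.Dual K g).smulRight c) = 0 :=
  TensorProduct.ext' (by intro x y; simp)

lemma lift_sr_add' (α : Module.Dual K g) (c c' : g →ₗ[K] M) :
    TensorProduct.lift (α.smulRight (c + c'))
      = TensorProduct.lift (α.smulRight c) + TensorProduct.lift (α.smulRight c') :=
  TensorProduct.ext' (by intro x y; simp [smul_add])

lemma lift_sr_neg' (α : Module.Dual K g) (c : g →ₗ[K] M) :
    TensorProduct.lift (α.smulRight (-c)) = - TensorProduct.lift (α.smulRight c) :=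
  TensorProduct.ext' (by intro x y; simp)

lemma lift_sr_zero' (α : Module.Dual K g) :
    TensorProduct.lift (α.smulRight (0 : g →ₗ[K] M)) = 0 :=
  TensorProduct.ext' (by intro x y; simp)

end helpers

@[simp] lemma ee_add_left (α α' β : Module.Dual K g) (t : g ⊗[K] g) :
    ee (α + α') β t = ee α β t + ee α' β t := by
  rw [ee, lift_sr_add]; rfl

@[simp] lemma ee_neg_left (α β : Module.Dual K g) (t : g ⊗[K] g) :
    ee (-α) β t = - ee α β t := by
  rw [ee, lift_sr_neg]; rfl

@[simp] lemma ee_add_right (α β β' : Module.Dual K g) (t : g ⊗[K] g) :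
    ee α (β + β') t = ee α β t + ee α β' t := by
  rw [ee, lift_sr_add']; rfl

@[simp] lemma ee_neg_right (α β : Module.Dual K g) (t : g ⊗[K] g) :
    ee α (-β) t = - ee α β t := by
  rw [ee, lift_sr_neg']; rfl
-- evaluation lemmas
lemma eval_coadStar (δ : g →ₗ[K] g ⊗[K] g) (α φ : Module.Dual K g) (X : g) :
    φ (coadStar δ α X) = - ee α φ (δ X) := by
  have h : φ ∘ₗ (TensorProduct.lift (α.smulRight (LinearMap.id (R := K) (M := g))))
      = ee α φ := TensorProduct.ext' (by intro x y; simp [smul_eq_mul])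
  have : φ (TensorProduct.lift (α.smulRight (LinearMap.id (R := K) (M := g))) (δ X))
      = ee α φ (δ X) := LinearMap.congr_fun h (δ X)
  simp [coadStar, ← this]

lemma eval_dualBr (δ : g →ₗ[K] g ⊗[K] g) (α β : Module.Dual K g) (X : g) :
    dualBr δ α β X = ee α β (δ X) := rfl

lemma coadG_apply (X : g) (α : Module.Dual K g) (Y : g) :
    coadG X α Y = - α ⁅X, Y⁆ := by
  simp [coadG, LieAlgebra.ad_apply]

lemma ee_skew {δ : g →ₗ[K] g ⊗[K] g}
    (hskew : ∀ X : g, TensorProduct.comm K g g (δ X) = - δ X)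
    (α β : Module.Dual K g) (X : g) :
    ee β α (δ X) = - ee α β (δ X) := by
  have := congrArg (ee α β) (hskew X)
  rw [ee_comm] at this
  simpa using this

-- the quadratic functional
noncomputable def Qf (δ : g →ₗ[K] g ⊗[K] g) (α β γ : Module.Dual K g) :
    g ⊗[K] g →ₗ[K] K :=
  TensorProduct.lift (((ee α β) ∘ₗ δ).smulRight γ)

@[simp] lemma Qf_tmul (δ : g →ₗ[K] g ⊗[K] g) (α β γ : Module.Dual K g) (x y : g) :
    Qf δ α β γ (x ⊗ₜ[K] y) = ee α β (δ x) * γ y := by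
  simp [Qf, smul_eq_mul]

noncomputable def e3 (α β γ : Module.Dual K g) : g ⊗[K] (g ⊗[K] g) →ₗ[K] K :=
  TensorProduct.lift (α.smulRight (ee β γ))

@[simp] lemma e3_tmul (α β γ : Module.Dual K g) (x y z : g) :
    e3 α β γ (x ⊗ₜ[K] (y ⊗ₜ[K] z)) = α x * (β y * γ z) := by
  simp [e3, smul_eq_mul]

noncomputable def Tmap (δ : g →ₗ[K] g ⊗[K] g) : g →ₗ[K] g ⊗[K] (g ⊗[K] g) :=
  (TensorProduct.assoc K g g g).toLinearMap ∘ₗ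
    (TensorProduct.map δ LinearMap.id) ∘ₗ δ

lemma e3_cyc (α β γ : Module.Dual K g) (t : g ⊗[K] (g ⊗[K] g)) :
    e3 α β γ (cyc3 K g t) = e3 γ α β t := by
  have h : (e3 α β γ) ∘ₗ cyc3 K g = e3 γ α β := by
    apply TensorProduct.ext'
    intro x t
    induction t using TensorProduct.induction_on with
    | zero => simp
    | tmul y z => simp [cyc3]; ring
    | add a b ha hb =>
        simp only [tmul_add, map_add, ha, hb]
  exact LinearMap.congr_fun h t

lemma Qform (δ : g →ₗ[K] g ⊗[K] g) (α β γ : Module.Dual K g) (X : g) :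
    e3 α β γ (Tmap δ X) = Qf δ α β γ (δ X) := by
  have h : (e3 α β γ) ∘ₗ ((TensorProduct.assoc K g g g).toLinearMap ∘ₗ
      (TensorProduct.map δ LinearMap.id)) = Qf δ α β γ := by
    apply TensorProduct.ext'
    intro x y
    simp only [LinearMap.comp_apply, TensorProduct.map_tmul, LinearMap.id_coe, id_eq,
      Qf_tmul]
    induction (δ x) using TensorProduct.induction_on with
    | zero => simp
    | tmul a b => simp [assoc_tmul]; ring
    | add s t hs ht => simp only [add_tmul, map_add, hs, ht, ee_comm]; ring
  exact LinearMap.congr_fun h (δ X)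

lemma cojac_scalar {δ : g →ₗ[K] g ⊗[K] g} (hcojac : CoJacobi3 δ)
    (α β γ : Module.Dual K g) (X : g) :
    Qf δ α β γ (δ X) + Qf δ γ α β (δ X) + Qf δ β γ α (δ X) = 0 := by
  have h := hcojac X
  simp only at h
  have h2 := congrArg (e3 α β γ) h
  simp only [map_add, map_zero, e3_cyc] at h2
  have e1 : e3 α β γ (Tmap δ X) = Qf δ α β γ (δ X) := Qform δ α β γ X
  have e2 : e3 γ α β (Tmap δ X) = Qf δ γ α β (δ X) := Qform δ γ α β X
  have e3' : e3 β γ α (Tmap δ X) = Qf δ β γ α (δ X) := Qform δ β γ α X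
  have : (Tmap δ X : g ⊗[K] (g ⊗[K] g))
      = (TensorProduct.assoc K g g g).toLinearMap
          ((TensorProduct.map δ LinearMap.id) (δ X)) := rfl
  rw [show ((TensorProduct.assoc K g g g).toLinearMap ∘ₗ
      (TensorProduct.map δ LinearMap.id) ∘ₗ δ) X = Tmap δ X from rfl] at h2
  linear_combination h2 - e1 - e2 - e3'

section skewlemmas
variable {δ : g →ₗ[K] g ⊗[K] g}
  (hskew : ∀ X : g, TensorProduct.comm K g g (δ X) = - δ X)
include hskew

lemma Qf_swap (α β γ : Module.Dual K g) (t : g ⊗[K] g) :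
    Qf δ β α γ t = - Qf δ α β γ t := by
  have h : Qf δ β α γ = - Qf δ α β γ := by
    apply TensorProduct.ext'
    intro x y
    simp only [Qf_tmul, LinearMap.neg_apply]
    rw [ee_skew hskew]
    ring
  rw [h]; rfl

lemma ee_dualBr_right (α β γ : Module.Dual K g) (X : g) :
    ee α (dualBr δ β γ) (δ X) = - Qf δ β γ α (δ X) := by
  have h : ee α (dualBr δ β γ)
      = (Qf δ β γ α) ∘ₗ (TensorProduct.comm K g g).toLinearMap := by
    apply TensorProduct.ext'
    intro x y
    simp only [LinearMap.comp_apply, LinearEquiv.coe_coe, comm_tmul, Qf_tmul, ee_tmul]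
    rw [eval_dualBr]
    ring
  rw [h]
  simp only [LinearMap.comp_apply, LinearEquiv.coe_coe]
  rw [hskew X, map_neg]

lemma ee_dualBr_left (α β γ : Module.Dual K g) (X : g) :
    ee (dualBr δ β γ) α (δ X) = Qf δ β γ α (δ X) := by
  rw [ee_skew hskew, ee_dualBr_right hskew, neg_neg]

lemma ee_coadStar (α β γ : Module.Dual K g) (X : g) :
    ee β γ (δ (coadStar δ α X)) = Qf δ β γ α (δ X) := by
  have hval : coadStar δ α X
      = - (TensorProduct.lift (α.smulRight (LinearMap.id (R := K) (M := g)))) (δ X) := rfl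
  rw [hval, map_neg, map_neg]
  have h : (ee β γ) ∘ₗ δ ∘ₗ
      (TensorProduct.lift (α.smulRight (LinearMap.id (R := K) (M := g))))
      = (Qf δ β γ α) ∘ₗ (TensorProduct.comm K g g).toLinearMap := by
    apply TensorProduct.ext'
    intro x y
    simp only [LinearMap.comp_apply, LinearEquiv.coe_coe, comm_tmul, Qf_tmul,
      TensorProduct.lift.tmul, LinearMap.smulRight_apply, LinearMap.id_apply,
      LinearMap.smul_apply, map_smul, smul_eq_mul]
    ring
  have := LinearMap.congr_fun h (δ X)
  simp only [LinearMap.comp_apply, LinearEquiv.coe_coe] at this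
  rw [this, hskew X, map_neg, neg_neg]

end skewlemmas

lemma ee_adTensor (α β : Module.Dual K g) (X : g) (t : g ⊗[K] g) :
    ee α β (adTensor X t)
      = ee (α ∘ₗ (LieAlgebra.ad K g X : g →ₗ[K] g)) β t
        + ee α (β ∘ₗ (LieAlgebra.ad K g X : g →ₗ[K] g)) t := by
  have h : (ee α β) ∘ₗ adTensor X
      = ee (α ∘ₗ (LieAlgebra.ad K g X : g →ₗ[K] g)) β
        + ee α (β ∘ₗ (LieAlgebra.ad K g X : g →ₗ[K] g)) := by
    apply TensorProduct.ext'
    intro x y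
    simp [adTensor, LieAlgebra.ad_apply]
    try ring
  exact LinearMap.congr_fun h t

@[simp] lemma lift_zero_map {M : Type*} [AddCommGroup M] [Module K M] :
    TensorProduct.lift (0 : g →ₗ[K] g →ₗ[K] M) = 0 :=
  TensorProduct.ext' (by intro x y; simp)

-- linearity lemmas
@[simp] lemma coadStar_zero (δ : g →ₗ[K] g ⊗[K] g) : coadStar δ 0 = 0 := by
  simp [coadStar, lift_sr_zero]

lemma coadStar_add (δ : g →ₗ[K] g ⊗[K] g) (α α' : Module.Dual K g) :
    coadStar δ (α + α') = coadStar δ α + coadStar δ α' := by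
  simp only [coadStar, lift_sr_add, LinearMap.add_comp]
  abel

@[simp] lemma coadStar_neg (δ : g →ₗ[K] g ⊗[K] g) (α : Module.Dual K g) :
    coadStar δ (-α) = - coadStar δ α := by
  simp only [coadStar, lift_sr_neg, LinearMap.neg_comp, neg_neg]

@[simp] lemma dualBr_zero_left (δ : g →ₗ[K] g ⊗[K] g) (β : Module.Dual K g) :
    dualBr δ 0 β = 0 := by
  simp [dualBr, lift_sr_zero]

@[simp] lemma dualBr_zero_right (δ : g →ₗ[K] g ⊗[K] g) (α : Module.Dual K g) :
    dualBr δ α 0 = 0 := by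
  simp [dualBr, lift_sr_zero']

lemma dualBr_add_left (δ : g →ₗ[K] g ⊗[K] g) (α α' β : Module.Dual K g) :
    dualBr δ (α + α') β = dualBr δ α β + dualBr δ α' β := by
  simp only [dualBr, lift_sr_add, LinearMap.add_comp]

lemma dualBr_add_right (δ : g →ₗ[K] g ⊗[K] g) (α β β' : Module.Dual K g) :
    dualBr δ α (β + β') = dualBr δ α β + dualBr δ α β' := by
  simp only [dualBr, lift_sr_add', LinearMap.add_comp]

@[simp] lemma dualBr_neg_left (δ : g →ₗ[K] g ⊗[K] g) (α β : Module.Dual K g) :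
    dualBr δ (-α) β = - dualBr δ α β := by
  simp only [dualBr, lift_sr_neg, LinearMap.neg_comp]

@[simp] lemma dualBr_neg_right (δ : g →ₗ[K] g ⊗[K] g) (α β : Module.Dual K g) :
    dualBr δ α (-β) = - dualBr δ α β := by
  simp only [dualBr, lift_sr_neg', LinearMap.neg_comp]

@[simp] lemma coadG_zero_right (X : g) : coadG (K := K) X (0 : Module.Dual K g) = 0 := by
  simp [coadG]

@[simp] lemma coadG_zero_left (α : Module.Dual K g) : coadG (K := K) (0 : g) α = 0 := by
  have : (LieAlgebra.ad K g 0 : g →ₗ[K] g) = 0 := by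
    ext Y; simp [LieAlgebra.ad_apply]
  simp [coadG, this]

lemma coadG_add_left (X X' : g) (α : Module.Dual K g) :
    coadG (K := K) (X + X') α = coadG X α + coadG X' α := by
  have : (LieAlgebra.ad K g (X + X') : g →ₗ[K] g)
      = (LieAlgebra.ad K g X : g →ₗ[K] g) + (LieAlgebra.ad K g X' : g →ₗ[K] g) := by
    ext Y; simp [LieAlgebra.ad_apply, add_lie]
  simp only [coadG, this, LinearMap.comp_add]
  abel

lemma coadG_add_right (X : g) (α α' : Module.Dual K g) :
    coadG (K := K) X (α + α') = coadG X α + coadG X α' := by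
  simp only [coadG, LinearMap.add_comp]
  abel

@[simp] lemma coadG_neg_right (X : g) (α : Module.Dual K g) :
    coadG (K := K) X (-α) = - coadG X α := by
  simp only [coadG, LinearMap.neg_comp, neg_neg]

noncomputable def Jac (δ : g →ₗ[K] g ⊗[K] g) (u v w : g × Module.Dual K g) :
    g × Module.Dual K g :=
  doubleBr δ u (doubleBr δ v w) + doubleBr δ v (doubleBr δ w u)
    + doubleBr δ w (doubleBr δ u v)

lemma Jac_rot (δ : g →ₗ[K] g ⊗[K] g) (u v w : g × Module.Dual K g) :
    Jac δ u v w = Jac δ v w u := by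
  unfold Jac; abel

lemma doubleBr_add_left (δ : g →ₗ[K] g ⊗[K] g) (u u' v : g × Module.Dual K g) :
    doubleBr δ (u + u') v = doubleBr δ u v + doubleBr δ u' v := by
  simp only [doubleBr, Prod.fst_add, Prod.snd_add, add_lie, map_add,
    coadStar_add, dualBr_add_left, coadG_add_left, coadG_add_right,
    LinearMap.add_apply, Prod.mk_add_mk]
  rw [Prod.mk.injEq]
  constructor <;> abel

lemma doubleBr_add_right (δ : g →ₗ[K] g ⊗[K] g) (u v v' : g × Module.Dual K g) :
    doubleBr δ u (v + v') = doubleBr δ u v + doubleBr δ u v' := by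
  simp only [doubleBr, Prod.fst_add, Prod.snd_add, lie_add, map_add,
    coadStar_add, dualBr_add_right, coadG_add_left, coadG_add_right,
    LinearMap.add_apply, Prod.mk_add_mk]
  rw [Prod.mk.injEq]
  constructor <;> abel

lemma Jac_add1 (δ : g →ₗ[K] g ⊗[K] g) (u u' v w : g × Module.Dual K g) :
    Jac δ (u + u') v w = Jac δ u v w + Jac δ u' v w := by
  simp only [Jac, doubleBr_add_left, doubleBr_add_right]
  abel

lemma Jac_add2 (δ : g →ₗ[K] g ⊗[K] g) (u v v' w : g × Module.Dual K g) :
    Jac δ u (v + v') w = Jac δ u v w + Jac δ u v' w := by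
  simp only [Jac, doubleBr_add_left, doubleBr_add_right]
  abel

lemma Jac_add3 (δ : g →ₗ[K] g ⊗[K] g) (u v w w' : g × Module.Dual K g) :
    Jac δ u v (w + w') = Jac δ u v w + Jac δ u v w' := by
  simp only [Jac, doubleBr_add_left, doubleBr_add_right]
  abel

lemma jac_ggg (δ : g →ₗ[K] g ⊗[K] g) (X Y Z : g) :
    Jac δ (X, (0 : Module.Dual K g)) (Y, 0) (Z, 0) = 0 := by
  simp [Jac, doubleBr, Prod.ext_iff]
  exact lie_jacobi X Y Z

lemma apply_lie (φ : Module.Dual K g) (X Z : g) :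
    φ ⁅X, Z⁆ = (φ ∘ₗ (LieAlgebra.ad K g X : g →ₗ[K] g)) Z := by
  simp [LieAlgebra.ad_apply]

lemma coadG_eq (X : g) (φ : Module.Dual K g) :
    coadG (K := K) X φ = - (φ ∘ₗ (LieAlgebra.ad K g X : g →ₗ[K] g)) := rfl

lemma jac_ggd [FiniteDimensional K g] (δ : g →ₗ[K] g ⊗[K] g)
    (hcoc : ∀ X Y : g, δ ⁅X, Y⁆ = adTensor X (δ Y) - adTensor Y (δ X))
    (X Y : g) (γ : Module.Dual K g) :
    Jac δ (X, (0 : Module.Dual K g)) (Y, 0) (0, γ) = 0 := by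
  simp only [Jac, doubleBr, Prod.ext_iff]
  simp
  constructor
  · rw [← Module.forall_dual_apply_eq_zero_iff K]
    intro φ
    simp only [map_add, map_sub]
    have hA : φ ⁅(coadStar δ γ) Y, X⁆
        = ee γ (φ ∘ₗ (LieAlgebra.ad K g X : g →ₗ[K] g)) (δ Y) := by
      rw [← lie_skew, map_neg, apply_lie, eval_coadStar, neg_neg]
    have hB : φ ((coadStar δ (coadG Y γ)) X)
        = ee (γ ∘ₗ (LieAlgebra.ad K g Y : g →ₗ[K] g)) φ (δ X) := by
      rw [eval_coadStar, coadG_eq, ee_neg_left, neg_neg]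
    have hCt : φ ⁅Y, (coadStar δ γ) X⁆
        = - ee γ (φ ∘ₗ (LieAlgebra.ad K g Y : g →ₗ[K] g)) (δ X) := by
      rw [apply_lie, eval_coadStar]
    have hD : φ ((coadStar δ (coadG X γ)) Y)
        = ee (γ ∘ₗ (LieAlgebra.ad K g X : g →ₗ[K] g)) φ (δ Y) := by
      rw [eval_coadStar, coadG_eq, ee_neg_left, neg_neg]
    have hE : φ ((coadStar δ γ) ⁅X, Y⁆) = - ee γ φ (δ ⁅X, Y⁆) := eval_coadStar δ γ φ _
    have hC : ee γ φ (δ ⁅X, Y⁆)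
        = ee (γ ∘ₗ (LieAlgebra.ad K g X : g →ₗ[K] g)) φ (δ Y)
          + ee γ (φ ∘ₗ (LieAlgebra.ad K g X : g →ₗ[K] g)) (δ Y)
          - (ee (γ ∘ₗ (LieAlgebra.ad K g Y : g →ₗ[K] g)) φ (δ X)
          + ee γ (φ ∘ₗ (LieAlgebra.ad K g Y : g →ₗ[K] g)) (δ X)) := by
      rw [hcoc X Y, map_sub, ee_adTensor, ee_adTensor]
      try ring
    rw [hA, hB, hCt, hD, hE]
    linear_combination -hC
  · ext Z
    simp only [LinearMap.add_apply, LinearMap.neg_apply, LinearMap.zero_apply, coadG_apply, map_neg, neg_neg]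
    have : ⁅⁅X, Y⁆, Z⁆ = ⁅X, ⁅Y, Z⁆⁆ - ⁅Y, ⁅X, Z⁆⁆ := lie_lie X Y Z
    rw [this, map_sub]
    ring

lemma tensor_eq_zero_of_pairings [FiniteDimensional K g] (t : g ⊗[K] g)
    (h : ∀ α β : Module.Dual K g, ee α β t = 0) : t = 0 := by
  rw [← Module.forall_dual_apply_eq_zero_iff K]
  intro φ
  obtain ⟨s, rfl⟩ := (TensorProduct.dualDistribEquiv K g g).surjective φ
  induction s using TensorProduct.induction_on with
  | zero => rw [map_zero]; rfl
  | tmul α β =>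
      have he : (TensorProduct.dualDistribEquiv K g g) (α ⊗ₜ[K] β) = ee α β := by
        apply TensorProduct.ext'
        intro x y
        simp [TensorProduct.dualDistribEquiv, TensorProduct.dualDistrib_apply, ee]
      rw [he]
      exact h α β
  | add a b ha hb => simp only [map_add, LinearMap.add_apply, ha, hb, add_zero]

@[simp] lemma coadG_neg_left (X : g) (α : Module.Dual K g) :
    coadG (K := K) (-X) α = - coadG X α := by
  have : (LieAlgebra.ad K g (-X) : g →ₗ[K] g) = - (LieAlgebra.ad K g X : g →ₗ[K] g) := by
    ext Y; simp [LieAlgebra.ad_apply]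
  simp only [coadG, this, LinearMap.comp_neg, neg_neg]

lemma jac_ddd [FiniteDimensional K g] (δ : g →ₗ[K] g ⊗[K] g)
    (hskew : ∀ X : g, TensorProduct.comm K g g (δ X) = - δ X)
    (hcojac : CoJacobi3 δ) (α β γ : Module.Dual K g) :
    Jac δ ((0 : g), α) (0, β) (0, γ) = 0 := by
  simp only [Jac, doubleBr, Prod.ext_iff]
  simp
  ext Z
  simp only [LinearMap.add_apply, LinearMap.zero_apply]
  rw [eval_dualBr, eval_dualBr, eval_dualBr,
    ee_dualBr_right hskew, ee_dualBr_right hskew, ee_dualBr_right hskew]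
  linear_combination - cojac_scalar hcojac α β γ Z

lemma jac_gdd [FiniteDimensional K g] (δ : g →ₗ[K] g ⊗[K] g)
    (hskew : ∀ X : g, TensorProduct.comm K g g (δ X) = - δ X)
    (hcojac : CoJacobi3 δ)
    (hcoc : ∀ X Y : g, δ ⁅X, Y⁆ = adTensor X (δ Y) - adTensor Y (δ X))
    (X : g) (β γ : Module.Dual K g) :
    Jac δ (X, (0 : Module.Dual K g)) (0, β) (0, γ) = 0 := by
  simp only [Jac, doubleBr, Prod.ext_iff]
  simp
  constructor
  · rw [← Module.forall_dual_apply_eq_zero_iff K]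
    intro φ
    simp only [map_add, map_neg]
    have h1 : φ ((coadStar δ (dualBr δ β γ)) X) = - Qf δ β γ φ (δ X) := by
      rw [eval_coadStar, ee_dualBr_left hskew]
    have h2 : φ ((coadStar δ β) ((coadStar δ γ) X)) = - Qf δ β φ γ (δ X) := by
      rw [eval_coadStar, ee_coadStar hskew]
    have h3 : φ ((coadStar δ γ) ((coadStar δ β) X)) = - Qf δ γ φ β (δ X) := by
      rw [eval_coadStar, ee_coadStar hskew]
    rw [h1, h2, h3]
    have F3 := cojac_scalar hcojac β φ γ X
    have s1 := Qf_swap hskew β γ φ (δ X)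
    have s2 := Qf_swap hskew γ φ β (δ X)
    linear_combination -F3 + s1 + s2
  · ext Y
    simp only [LinearMap.add_apply, LinearMap.sub_apply, LinearMap.neg_apply,
      LinearMap.zero_apply]
    have h1 : coadG X (dualBr δ β γ) Y = - ee β γ (δ ⁅X, Y⁆) := by
      rw [coadG_apply, eval_dualBr]
    have h2 : dualBr δ β (coadG X γ) Y
        = - ee β (γ ∘ₗ (LieAlgebra.ad K g X : g →ₗ[K] g)) (δ Y) := by
      rw [eval_dualBr, coadG_eq, ee_neg_right]
    have h3 : coadG ((coadStar δ γ) X) β Y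
        = - ee γ (β ∘ₗ (LieAlgebra.ad K g Y : g →ₗ[K] g)) (δ X) := by
      rw [coadG_apply, ← lie_skew, map_neg, neg_neg, apply_lie, eval_coadStar]
    have h4 : dualBr δ γ (coadG X β) Y
        = - ee γ (β ∘ₗ (LieAlgebra.ad K g X : g →ₗ[K] g)) (δ Y) := by
      rw [eval_dualBr, coadG_eq, ee_neg_right]
    have h5 : coadG ((coadStar δ β) X) γ Y
        = - ee β (γ ∘ₗ (LieAlgebra.ad K g Y : g →ₗ[K] g)) (δ X) := by
      rw [coadG_apply, ← lie_skew, map_neg, neg_neg, apply_lie, eval_coadStar]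
    rw [h1, h2, h3, h4, h5]
    have hC : ee β γ (δ ⁅X, Y⁆)
        = ee (β ∘ₗ (LieAlgebra.ad K g X : g →ₗ[K] g)) γ (δ Y)
          + ee β (γ ∘ₗ (LieAlgebra.ad K g X : g →ₗ[K] g)) (δ Y)
          - (ee (β ∘ₗ (LieAlgebra.ad K g Y : g →ₗ[K] g)) γ (δ X)
          + ee β (γ ∘ₗ (LieAlgebra.ad K g Y : g →ₗ[K] g)) (δ X)) := by
      rw [hcoc X Y, map_sub, ee_adTensor, ee_adTensor]
      try ring
    have sk1 := ee_skew hskew (β ∘ₗ (LieAlgebra.ad K g X : g →ₗ[K] g)) γ Y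
    have sk2 := ee_skew hskew (β ∘ₗ (LieAlgebra.ad K g Y : g →ₗ[K] g)) γ X
    linear_combination -hC - sk1 + sk2


lemma doubleBr_skew (δ : g →ₗ[K] g ⊗[K] g)
    (hskew : ∀ X : g, TensorProduct.comm K g g (δ X) = - δ X)
    (u v : g × Module.Dual K g) : doubleBr δ u v = - doubleBr δ v u := by
  have hd : dualBr δ v.2 u.2 = - dualBr δ u.2 v.2 := by
    ext X
    rw [LinearMap.neg_apply, eval_dualBr, eval_dualBr, ee_skew hskew]
  have hl : ⁅u.1, v.1⁆ = -⁅v.1, u.1⁆ := (lie_skew u.1 v.1).symm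
  simp only [doubleBr, Prod.neg_mk, Prod.mk.injEq]
  constructor
  · rw [hl]; abel
  · rw [hd]; abel

lemma jac_all [FiniteDimensional K g] (δ : g →ₗ[K] g ⊗[K] g)
    (hskew : ∀ X : g, TensorProduct.comm K g g (δ X) = - δ X)
    (hcojac : CoJacobi3 δ)
    (hcoc : ∀ X Y : g, δ ⁅X, Y⁆ = adTensor X (δ Y) - adTensor Y (δ X))
    (u v w : g × Module.Dual K g) : Jac δ u v w = 0 := by
  obtain ⟨X, α⟩ := u
  obtain ⟨Y, β⟩ := v
  obtain ⟨Z, γ⟩ := w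
  have hu : ((X, α) : g × Module.Dual K g) = (X, 0) + (0, α) := by simp
  have hv : ((Y, β) : g × Module.Dual K g) = (Y, 0) + (0, β) := by simp
  have hw : ((Z, γ) : g × Module.Dual K g) = (Z, 0) + (0, γ) := by simp
  have e1 : Jac δ (X,0) (Y,0) (Z,0) = 0 := jac_ggg δ X Y Z
  have e2 : Jac δ (X,0) (Y,0) (0,γ) = 0 := jac_ggd δ hcoc X Y γ
  have e3 : Jac δ (X,0) (0,β) (Z,0) = 0 := by
    rw [Jac_rot, Jac_rot]; exact jac_ggd δ hcoc Z X β
  have e4 : Jac δ (X,0) (0,β) (0,γ) = 0 := jac_gdd δ hskew hcojac hcoc X β γ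
  have e5 : Jac δ (0,α) (Y,0) (Z,0) = 0 := by
    rw [Jac_rot]; exact jac_ggd δ hcoc Y Z α
  have e6 : Jac δ (0,α) (Y,0) (0,γ) = 0 := by
    rw [Jac_rot]; exact jac_gdd δ hskew hcojac hcoc Y γ α
  have e7 : Jac δ (0,α) (0,β) (Z,0) = 0 := by
    rw [Jac_rot, Jac_rot]; exact jac_gdd δ hskew hcojac hcoc Z α β
  have e8 : Jac δ (0,α) (0,β) (0,γ) = 0 := jac_ddd δ hskew hcojac α β γ
  rw [hu, hv, hw]
  simp only [Jac_add1, Jac_add2, Jac_add3, e1, e2, e3, e4, e5, e6, e7, e8, add_zero,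
    zero_add]

/-- for a finite-dimensional Lie algebra `g` with a cobracket `δ`
satisfying co-Jacobi, `δ` is a 1-cocycle (i.e. `(g,δ)` is a Lie bialgebra) if and
only if the Drinfeld double bracket makes `g ⊕ g*` a Lie algebra (antisymmetry and
the Jacobi identity hold). -/
theorem lie_bialgebra_iff_drinfeld_double [FiniteDimensional K g]
    (δ : g →ₗ[K] g ⊗[K] g)
    (hskew : ∀ X : g, TensorProduct.comm K g g (δ X) = - δ X)
    (hcojac : CoJacobi3 δ) :
    (∀ X Y : g, δ ⁅X, Y⁆ = adTensor X (δ Y) - adTensor Y (δ X))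
      ↔ ((∀ u v : g × Module.Dual K g, doubleBr δ u v = - doubleBr δ v u) ∧
         (∀ u v w : g × Module.Dual K g,
            doubleBr δ u (doubleBr δ v w) + doubleBr δ v (doubleBr δ w u)
              + doubleBr δ w (doubleBr δ u v) = 0)) := by
  constructor
  · intro hcoc
    refine ⟨doubleBr_skew δ hskew, fun u v w => ?_⟩
    have := jac_all δ hskew hcojac hcoc u v w
    simpa [Jac] using this
  · rintro ⟨hanti, hjac⟩ X Y
    rw [← sub_eq_zero]
    apply tensor_eq_zero_of_pairings
    intro γ φ
    have h := hjac (X, 0) (Y, 0) (0, γ)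
    have h1 := congrArg Prod.fst h
    simp [doubleBr] at h1
    have h2 := congrArg φ h1
    simp only [map_add, map_sub, map_zero] at h2
    have hA : φ ⁅(coadStar δ γ) Y, X⁆
        = ee γ (φ ∘ₗ (LieAlgebra.ad K g X : g →ₗ[K] g)) (δ Y) := by
      rw [← lie_skew, map_neg, apply_lie, eval_coadStar, neg_neg]
    have hB : φ ((coadStar δ (coadG Y γ)) X)
        = ee (γ ∘ₗ (LieAlgebra.ad K g Y : g →ₗ[K] g)) φ (δ X) := by
      rw [eval_coadStar, coadG_eq, ee_neg_left, neg_neg]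
    have hCt : φ ⁅Y, (coadStar δ γ) X⁆
        = - ee γ (φ ∘ₗ (LieAlgebra.ad K g Y : g →ₗ[K] g)) (δ X) := by
      rw [apply_lie, eval_coadStar]
    have hD : φ ((coadStar δ (coadG X γ)) Y)
        = ee (γ ∘ₗ (LieAlgebra.ad K g X : g →ₗ[K] g)) φ (δ Y) := by
      rw [eval_coadStar, coadG_eq, ee_neg_left, neg_neg]
    have hE : φ ((coadStar δ γ) ⁅X, Y⁆) = - ee γ φ (δ ⁅X, Y⁆) := eval_coadStar δ γ φ _
    rw [hA, hB, hCt, hD, hE] at h2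
    rw [map_sub, map_sub, ee_adTensor, ee_adTensor]
    linear_combination -h2
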